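/- Let P be the orthogonal projection of ℓ²(K_q) onto C^q(K,ℂ). Then D_q^up = P ∘ D_q^up ∘ P and D_q^down = P ∘ D_q^down ∘ P. In particular, C^q(K,ℂ) is an invariant subspace of both D_q^up and D_q^down, and both discriminants vanish identically on C^q_+(K,ℂ). -/
import Mathlib


open scoped BigOperators

/-- The set of oriented `q`-simplices of a simplicial complex, together with the
orientation-reversal involution `bar` (writing `τ̄` for `bar τ`). -/
structure OrientedSet where
  K : Type
  bar : K → K
  bar_invol : ∀ τ, bar (bar τ) = τ
  bar_ne : ∀ τ, bar τ ≠ τ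

/-- The data of an up graph (`mult = 2(q+1)`) or a down graph (`mult = 2`) on the set of
oriented `q`-simplices: the sign function `η` (extended by `0` off the edge set, so that
`(τ₁, τ₂)` is an edge iff `eta τ₁ τ₂ ≠ 0`), the degree function (`deg_X`, resp. `deg_Y`),
and local finiteness; the degree of a vertex `τ` in the graph is `mult * deg τ`. -/
structure GroverStructure (O : OrientedSet) where
  eta : O.K → O.K → ℝ
  eta_symm : ∀ τ₁ τ₂, eta τ₁ τ₂ = eta τ₂ τ₁
  eta_vals : ∀ τ₁ τ₂, eta τ₁ τ₂ = 0 ∨ eta τ₁ τ₂ = 1 ∨ eta τ₁ τ₂ = -1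
  eta_bar_left : ∀ τ₁ τ₂, eta (O.bar τ₁) τ₂ = - eta τ₁ τ₂
  eta_self : ∀ τ, eta τ τ = 0
  eta_bar_self : ∀ τ, eta τ (O.bar τ) = 0
  deg : O.K → ℕ
  deg_pos : ∀ τ, 0 < deg τ
  deg_bar : ∀ τ, deg (O.bar τ) = deg τ
  mult : ℕ
  nbhdFinite : ∀ τ, {τ' | eta τ τ' ≠ 0}.Finite
  nbhd_card : ∀ τ, (nbhdFinite τ).toFinset.card = mult * deg τ

namespace GroverStructure

variable {O : OrientedSet} (Y : GroverStructure O)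

/-- `(τ₁, τ₂)` is an oriented edge of the up/down graph. -/
def Edge (τ₁ τ₂ : O.K) : Prop := Y.eta τ₁ τ₂ ≠ 0

/-- The normalization constant `(mult * deg τ)^(-1/2)`. -/
noncomputable def c (τ : O.K) : ℂ := ((Real.sqrt (Y.mult * Y.deg τ) : ℝ) : ℂ)⁻¹

/-- The operator `d : ℓ²(E) → ℓ²(K)`; elements of `ℓ²(E)` are represented as
functions on `K × K` (supported on the set of edges). -/
noncomputable def d (g : O.K × O.K → ℂ) : O.K → ℂ :=
  fun τ => Y.c τ * ∑ᶠ τ' ∈ {τ' | Y.eta τ τ' ≠ 0}, g (τ, τ')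

/-- The adjoint `d* : ℓ²(K) → ℓ²(E)`. -/
noncomputable def dstar (f : O.K → ℂ) : O.K × O.K → ℂ :=
  fun p => if Y.eta p.1 p.2 ≠ 0 then Y.c p.1 * f p.1 else 0

/-- The shift operator `(S g)(τ₁,τ₂) = η(τ₁,τ₂) • g(τ₂,τ₁)`. -/
noncomputable def shift (g : O.K × O.K → ℂ) : O.K × O.K → ℂ :=
  fun p => (Y.eta p.1 p.2 : ℂ) * g (p.2, p.1)

/-- The discriminant operator `D = d ∘ S ∘ d*`. -/
noncomputable def disc (f : O.K → ℂ) : O.K → ℂ := Y.d (Y.shift (Y.dstar f))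

/-- The Grover walk `U = S (2 d* d − I)`. -/
noncomputable def walk (g : O.K × O.K → ℂ) : O.K × O.K → ℂ :=
  Y.shift (fun p => 2 * Y.dstar (Y.d g) p - g p)

/-- Membership in `ℓ²(E)`: square summable and supported on the edge set. -/
def MemEdge (g : O.K × O.K → ℂ) : Prop :=
  Memℓp g 2 ∧ ∀ p : O.K × O.K, ¬ Y.Edge p.1 p.2 → g p = 0

end GroverStructure

/-- The orthogonal projection of `ℓ²(K_q)` onto the cochain space
`C^q(K,ℂ) = {f : f(τ̄) = -f(τ)}`. -/
noncomputable def projC (O : OrientedSet) (f : O.K → ℂ) : O.K → ℂ :=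
  fun τ => (f τ - f (O.bar τ)) / 2

section Aux

open GroverStructure

variable {O : OrientedSet} (Y : GroverStructure O)

lemma disc_eq_sum (f : O.K → ℂ) (τ : O.K) :
    Y.disc f τ = Y.c τ * ∑ τ' ∈ (Y.nbhdFinite τ).toFinset,
      (Y.eta τ τ' : ℂ) * (Y.c τ' * f τ') := by
  unfold GroverStructure.disc GroverStructure.d GroverStructure.shift GroverStructure.dstar
  rw [finsum_mem_eq_finite_toFinset_sum _ (Y.nbhdFinite τ)]
  congr 1
  refine Finset.sum_congr rfl fun τ' hτ' => ?_
  rw [Set.Finite.mem_toFinset] at hτ'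
  simp only [Set.mem_setOf_eq] at hτ'
  have h : Y.eta τ' τ ≠ 0 := by rwa [Y.eta_symm]
  simp [h]

lemma nbhd_bar (τ : O.K) :
    (Y.nbhdFinite (O.bar τ)).toFinset = (Y.nbhdFinite τ).toFinset := by
  ext τ'
  simp [Set.Finite.mem_toFinset, Y.eta_bar_left]

lemma c_bar (τ : O.K) : Y.c (O.bar τ) = Y.c τ := by
  unfold GroverStructure.c; rw [Y.deg_bar]

lemma disc_odd (f : O.K → ℂ) (τ : O.K) : Y.disc f (O.bar τ) = - Y.disc f τ := by
  rw [disc_eq_sum, disc_eq_sum, nbhd_bar, c_bar]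
  rw [← mul_neg, ← Finset.sum_neg_distrib]
  congr 1
  refine Finset.sum_congr rfl fun τ' _ => ?_
  rw [Y.eta_bar_left]; push_cast; ring

lemma disc_even_zero (f : O.K → ℂ) (hf : ∀ τ, f (O.bar τ) = f τ) (τ : O.K) :
    Y.disc f τ = 0 := by
  rw [disc_eq_sum]
  have gmem : ∀ a ∈ (Y.nbhdFinite τ).toFinset, O.bar a ∈ (Y.nbhdFinite τ).toFinset := by
    intro a ha
    rw [Set.Finite.mem_toFinset] at ha ⊢
    simp only [Set.mem_setOf_eq] at ha ⊢
    rw [Y.eta_symm, Y.eta_bar_left, Y.eta_symm]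
    simpa using ha
  have hsum : ∑ τ' ∈ (Y.nbhdFinite τ).toFinset,
      (Y.eta τ τ' : ℂ) * (Y.c τ' * f τ') = 0 := by
    refine Finset.sum_involution (fun a _ => O.bar a) (fun a ha => ?_)
      (fun a _ _ => O.bar_ne a) gmem (fun a ha => O.bar_invol a)
    have h1 : Y.eta τ (O.bar a) = - Y.eta τ a := by
      rw [Y.eta_symm, Y.eta_bar_left, Y.eta_symm]
    rw [h1, c_bar, hf]; push_cast; ring
  rw [hsum, mul_zero]

lemma disc_add (f g : O.K → ℂ) (τ : O.K) :
    Y.disc (fun x => f x + g x) τ = Y.disc f τ + Y.disc g τ := by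
  simp only [disc_eq_sum, ← mul_add, ← Finset.sum_add_distrib]

lemma disc_proj (f : O.K → ℂ) (τ : O.K) :
    Y.disc f τ = Y.disc (projC O f) τ := by
  have hdecomp : f = fun x => projC O f x + (f x + f (O.bar x)) / 2 := by
    funext x; unfold projC; ring
  have heven : ∀ x, (f (O.bar x) + f (O.bar (O.bar x))) / 2 = (f x + f (O.bar x)) / 2 := by
    intro x; rw [O.bar_invol]; ring
  calc Y.disc f τ = Y.disc (fun x => projC O f x + (f x + f (O.bar x)) / 2) τ := by
        rw [← hdecomp]
    _ = Y.disc (projC O f) τ + Y.disc (fun x => (f x + f (O.bar x)) / 2) τ :=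
        disc_add Y _ _ τ
    _ = Y.disc (projC O f) τ := by
        rw [disc_even_zero Y (fun x => (f x + f (O.bar x)) / 2) heven, add_zero]

lemma disc_eq_proj (f : O.K → ℂ) :
    Y.disc f = projC O (Y.disc (projC O f)) := by
  funext τ
  rw [disc_proj Y f τ]
  unfold projC
  rw [disc_odd]
  ring

end Aux

/-- Let `P` be the orthogonal projection of `ℓ²(K_q)` onto `C^q(K,ℂ)`.
Then `D_q^up = P D_q^up P` and `D_q^down = P D_q^down P`; in particular `C^q(K,ℂ)` is an
invariant subspace of both discriminants, and both vanish identically on `C^q_+(K,ℂ)`. -/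

theorem up_down_disc_eq_proj_comp_proj (O : OrientedSet) (q : ℕ)
    (X : GroverStructure O) (hXup : X.mult = 2 * (q + 1))
    (Y : GroverStructure O) (hYdown : Y.mult = 2) :
    (∀ f : O.K → ℂ, Memℓp f 2 → X.disc f = projC O (X.disc (projC O f))) ∧
    (∀ f : O.K → ℂ, Memℓp f 2 → Y.disc f = projC O (Y.disc (projC O f))) ∧
    (∀ f : O.K → ℂ, Memℓp f 2 → (∀ τ, f (O.bar τ) = - f τ) →
      (∀ τ, (X.disc f) (O.bar τ) = - (X.disc f) τ) ∧
      (∀ τ, (Y.disc f) (O.bar τ) = - (Y.disc f) τ)) ∧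
    (∀ f : O.K → ℂ, Memℓp f 2 → (∀ τ, f (O.bar τ) = f τ) →
      X.disc f = 0 ∧ Y.disc f = 0) := by
  refine ⟨fun f _ => disc_eq_proj X f, fun f _ => disc_eq_proj Y f,
    fun f _ _ => ⟨fun τ => disc_odd X f τ, fun τ => disc_odd Y f τ⟩,
    fun f _ hf => ⟨funext (disc_even_zero X f hf), funext (disc_even_zero Y f hf)⟩⟩
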